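/- In the noise-free setting under Assumption 1, let A ⊆ A† with B = A†∖A, let d ∈ ℝ^p have |d_i| = λ for all i ∈ A, let x_A = (Ψ_AᵗΨ_A)⁻¹(Ψ_Aᵗ y − d_A), define d_i = Ψ_iᵗ(y − Ψ_A x_A) for i ∉ A, and let i_A be an index maximizing |x†_i| over i ∈ A^c. Then for every i ∉ A† one has |d_i| ≤ ¼|x†_{i_A}| + ¼λ. -/

import Mathlib

open Matrix

/-- The submatrix `Ψ_A` of `Ψ` consisting of the columns indexed by `A`. -/
def colSub {n p : ℕ} (Ψ : Matrix (Fin n) (Fin p) ℝ) (A : Finset (Fin p)) :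
    Matrix (Fin n) {i // i ∈ A} ℝ :=
  Matrix.of fun i j => Ψ i j.1

/-- `Ψ` satisfies the restricted isometry property of order `k` with constant `δ`:
`(1 − δ)‖x‖₂² ≤ ‖Ψx‖₂² ≤ (1 + δ)‖x‖₂²` for all `x` with at most `k` nonzero entries. -/
def HasRIP {n p : ℕ} (Ψ : Matrix (Fin n) (Fin p) ℝ) (k : ℕ) (δ : ℝ) : Prop :=
  ∀ x : Fin p → ℝ, (Finset.univ.filter (fun i => x i ≠ 0)).card ≤ k →
    (1 - δ) * (∑ i, x i ^ 2) ≤ ∑ j, (Ψ *ᵥ x) j ^ 2 ∧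
      ∑ j, (Ψ *ᵥ x) j ^ 2 ≤ (1 + δ) * (∑ i, x i ^ 2)

set_option maxHeartbeats 1000000
theorem core_ineq (δ τ σ R X lam : ℝ)
    (hδ0 : 0 < δ)
    (hτ : 0 ≤ τ) (hσ : 0 ≤ σ) (hR : 0 < R) (hX : 0 ≤ X) (hlam : 0 ≤ lam)
    (hRst : τ^2 + σ^2 = R^2)
    (hδR : δ * (4*R+1) ≤ 1) :
    16 * δ^2 * τ^2 * X^2 * R^2 + (δ*τ*X + lam*σ)^2 ≤ (X + lam)^2 * R^2 := by
  have h0 : 0 ≤ δ * (4*R+1) := by positivity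
  have h1 : δ^2 * (16*R^2 + 8*R + 1) ≤ 1 := by nlinarith [mul_self_le_mul_self h0 hδR]
  have hτR : τ ≤ R := by nlinarith [sq_nonneg σ]
  have hσR : σ ≤ R := by nlinarith [sq_nonneg τ]
  have hδ1 : δ ≤ 1 := by nlinarith
  have e1 : δ^2 * (16*R^2+1) ≤ 1 := by nlinarith [sq_nonneg δ, hR.le]
  have hA : X^2*τ^2*(δ^2*(16*R^2+1)) ≤ X^2*R^2 := by
    have : X^2*τ^2 ≤ X^2*R^2 := by nlinarith [sq_nonneg X]
    nlinarith [mul_nonneg (mul_nonneg (sq_nonneg X) (sq_nonneg τ)) (sub_nonneg.2 e1), sq_nonneg X, sq_nonneg τ]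
  have hτσ : τ*σ ≤ R^2 := by nlinarith
  have hB : 2*(δ*τ*X)*(lam*σ) ≤ 2*X*lam*R^2 := by
    have h2 : δ*(τ*σ) ≤ R^2 := by nlinarith [mul_nonneg hτ hσ]
    nlinarith [mul_nonneg hX hlam, mul_nonneg (mul_nonneg hτ hσ) hδ0.le]
  have hC : lam^2*σ^2 ≤ lam^2*R^2 := by nlinarith [sq_nonneg lam]
  nlinarith [hA, hB, hC]

theorem final_step (T s t : ℕ) (hst : s + t = T) (δ X lam a W D : ℝ)
    (hδ0 : 0 < δ) (hδ1 : δ < 1) (hX : 0 ≤ X) (hlam : 0 ≤ lam)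
    (ha0 : 0 ≤ a) (hW0 : 0 ≤ W) (hD : 0 ≤ D)
    (hAss : δ ≤ 1/(4*Real.sqrt T+1))
    (ha : a ≤ Real.sqrt t * X)
    (hW : (1-δ)*W ≤ δ*a + lam*Real.sqrt s)
    (hD2 : D^2 ≤ δ^2*(a^2+W^2)) :
    D ≤ 1/4*X + 1/4*lam := by
  set R := Real.sqrt T with hRdef
  set τ := Real.sqrt t with hτdef
  set σ := Real.sqrt s with hσdef
  have hR0 : 0 ≤ R := Real.sqrt_nonneg _
  have hτ0 : 0 ≤ τ := Real.sqrt_nonneg _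
  have hσ0 : 0 ≤ σ := Real.sqrt_nonneg _
  have hRst : τ^2 + σ^2 = R^2 := by
    rw [hRdef, hτdef, hσdef, Real.sq_sqrt (by positivity : (0:ℝ) ≤ (t:ℝ)),
      Real.sq_sqrt (by positivity : (0:ℝ) ≤ (s:ℝ)), Real.sq_sqrt (by positivity : (0:ℝ) ≤ (T:ℝ))]
    have : (s:ℝ) + t = T := by exact_mod_cast congrArg (Nat.cast : ℕ → ℝ) hst
    linarith
  have hδR : δ * (4*R+1) ≤ 1 := by
    have h4 : 0 < 4*R+1 := by linarith
    calc δ * (4*R+1) ≤ (1/(4*R+1)) * (4*R+1) := by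
          apply mul_le_mul_of_nonneg_right hAss h4.le
      _ = 1 := by field_simp
  rcases Nat.eq_zero_or_pos T with hT0 | hTpos
  · -- degenerate case
    have hs : s = 0 := by omega
    have ht : t = 0 := by omega
    have hτz : τ = 0 := by rw [hτdef, ht]; simp
    have hσz : σ = 0 := by rw [hσdef, hs]; simp
    have haz : a = 0 := le_antisymm (by rw [hτz] at ha; linarith) ha0
    have hWz : W = 0 := by nlinarith
    have : D ^ 2 ≤ 0 := by rw [haz, hWz] at hD2; nlinarith
    have : D = 0 := by nlinarith
    rw [this]; positivity
  · have hRpos : 0 < R := Real.sqrt_pos.2 (by exact_mod_cast hTpos)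
    have key := core_ineq δ τ σ R X lam hδ0 hτ0 hσ0 hRpos hX hlam hRst hδR
    -- a^2 ≤ τ^2 X^2
    have ha2 : a^2 ≤ τ^2 * X^2 := by nlinarith [mul_nonneg hτ0 hX]
    -- 16 R² δ² W² ≤ (δτX + lam σ)²
    have hWb : 4*R*δ*W ≤ δ*τ*X + lam*σ := by nlinarith [mul_nonneg hδ0.le ha0]
    have hWb2 : 16*R^2*δ^2*W^2 ≤ (δ*τ*X + lam*σ)^2 := by
      have h00 : 0 ≤ 4*R*δ*W := by positivity
      nlinarith [mul_self_le_mul_self h00 hWb]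
    have p1 : (16*δ^2*R^2) * a^2 ≤ (16*δ^2*R^2) * (τ^2*X^2) :=
      mul_le_mul_of_nonneg_left ha2 (by positivity)
    have main : 16 * D^2 ≤ (X+lam)^2 := by
      have h3 : 16 * (δ^2*(a^2+W^2)) * R^2 ≤ (X+lam)^2 * R^2 := by linarith [p1, hWb2, key]
      have h4 : 16 * (δ^2*(a^2+W^2)) ≤ (X+lam)^2 :=
        le_of_mul_le_mul_right h3 (by positivity : (0:ℝ) < R^2)
      linarith
    nlinarith [main, sq_nonneg (X + lam - 4*D), mul_nonneg hD (by linarith : (0:ℝ) ≤ X + lam)]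

open Matrix


theorem rip_half {n p : ℕ} (Ψ : Matrix (Fin n) (Fin p) ℝ) (k : ℕ) (δ : ℝ)
    (hRIP : HasRIP Ψ k δ)
    (u v : Fin p → ℝ) (hdisj : ∀ i, u i = 0 ∨ v i = 0)
    (hcard : (Finset.univ.filter (fun i => u i ≠ 0 ∨ v i ≠ 0)).card ≤ k) :
    2 * (∑ j, (Ψ *ᵥ u) j * (Ψ *ᵥ v) j) ≤ δ * ((∑ i, u i ^ 2) + (∑ i, v i ^ 2)) := by
  have hsub1 : (Finset.univ.filter (fun i => (u + v) i ≠ 0)).card ≤ k := by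
    refine le_trans (Finset.card_le_card ?_) hcard
    intro i hi
    simp only [Finset.mem_filter, Finset.mem_univ, true_and] at *
    by_contra h
    push_neg at h
    exact hi (by simp [Pi.add_apply, h.1, h.2])
  have hsub2 : (Finset.univ.filter (fun i => (u - v) i ≠ 0)).card ≤ k := by
    refine le_trans (Finset.card_le_card ?_) hcard
    intro i hi
    simp only [Finset.mem_filter, Finset.mem_univ, true_and] at *
    by_contra h
    push_neg at h
    exact hi (by simp [Pi.sub_apply, h.1, h.2])
  obtain ⟨_, hup⟩ := hRIP (u + v) hsub1
  obtain ⟨hlo, _⟩ := hRIP (u - v) hsub2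
  have hsum_add : ∑ i, (u + v) i ^ 2 = ∑ i, u i ^ 2 + ∑ i, v i ^ 2 := by
    rw [← Finset.sum_add_distrib]
    refine Finset.sum_congr rfl fun i _ => ?_
    rcases hdisj i with h | h <;> simp [Pi.add_apply, h]
  have hsum_sub : ∑ i, (u - v) i ^ 2 = ∑ i, u i ^ 2 + ∑ i, v i ^ 2 := by
    rw [← Finset.sum_add_distrib]
    refine Finset.sum_congr rfl fun i _ => ?_
    rcases hdisj i with h | h <;> simp [Pi.sub_apply, h]
  have hexp : ∑ j, (Ψ *ᵥ (u + v)) j ^ 2 - ∑ j, (Ψ *ᵥ (u - v)) j ^ 2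
      = 4 * ∑ j, (Ψ *ᵥ u) j * (Ψ *ᵥ v) j := by
    rw [Matrix.mulVec_add, Matrix.mulVec_sub, ← Finset.sum_sub_distrib, Finset.mul_sum]
    refine Finset.sum_congr rfl fun j _ => ?_
    simp only [Pi.add_apply, Pi.sub_apply]
    ring
  rw [hsum_add] at hup
  rw [hsum_sub] at hlo
  linarith

theorem rip_half_abs {n p : ℕ} (Ψ : Matrix (Fin n) (Fin p) ℝ) (k : ℕ) (δ : ℝ)
    (hRIP : HasRIP Ψ k δ)
    (u v : Fin p → ℝ) (hdisj : ∀ i, u i = 0 ∨ v i = 0)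
    (hcard : (Finset.univ.filter (fun i => u i ≠ 0 ∨ v i ≠ 0)).card ≤ k) :
    2 * |∑ j, (Ψ *ᵥ u) j * (Ψ *ᵥ v) j| ≤ δ * ((∑ i, u i ^ 2) + (∑ i, v i ^ 2)) := by
  have h1 := rip_half Ψ k δ hRIP u v hdisj hcard
  have hdisj' : ∀ i, u i = 0 ∨ (-v) i = 0 := fun i => by
    rcases hdisj i with h | h
    · exact Or.inl h
    · exact Or.inr (by simp [h])
  have hcard' : (Finset.univ.filter (fun i => u i ≠ 0 ∨ (-v) i ≠ 0)).card ≤ k := by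
    refine le_trans (le_of_eq (congrArg Finset.card ?_)) hcard
    refine Finset.filter_congr fun i _ => ?_
    simp
  have h2 := rip_half Ψ k δ hRIP u (-v) hdisj' hcard'
  rw [Matrix.mulVec_neg] at h2
  simp only [Pi.neg_apply, mul_neg, Finset.sum_neg_distrib] at h2
  simp only [neg_sq] at h2
  rcases abs_cases (∑ j, (Ψ *ᵥ u) j * (Ψ *ᵥ v) j) with ⟨he, _⟩ | ⟨he, _⟩ <;> rw [he] <;> linarith

theorem sum_sq_eq_zero {p : ℕ} {u : Fin p → ℝ} (h : ∑ i, u i ^ 2 = 0) : u = 0 := by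
  funext i
  have := Finset.sum_eq_zero_iff_of_nonneg (fun j (_ : j ∈ Finset.univ) => sq_nonneg (u j)) |>.1 h i (Finset.mem_univ i)
  exact pow_eq_zero_iff (n := 2) (by norm_num) |>.1 this

theorem rip_cross {n p : ℕ} (Ψ : Matrix (Fin n) (Fin p) ℝ) (k : ℕ) (δ : ℝ)
    (hδ0 : 0 ≤ δ) (hRIP : HasRIP Ψ k δ)
    (u v : Fin p → ℝ) (hdisj : ∀ i, u i = 0 ∨ v i = 0)
    (hcard : (Finset.univ.filter (fun i => u i ≠ 0 ∨ v i ≠ 0)).card ≤ k) :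
    (∑ j, (Ψ *ᵥ u) j * (Ψ *ᵥ v) j) ^ 2 ≤ δ ^ 2 * (∑ i, u i ^ 2) * (∑ i, v i ^ 2) := by
  set a := ∑ i, u i ^ 2 with ha
  set b := ∑ i, v i ^ 2 with hb
  have ha0 : 0 ≤ a := Finset.sum_nonneg fun i _ => sq_nonneg _
  have hb0 : 0 ≤ b := Finset.sum_nonneg fun i _ => sq_nonneg _
  rcases eq_or_lt_of_le ha0 with haz | hap
  · have : u = 0 := sum_sq_eq_zero haz.symm
    rw [this, Matrix.mulVec_zero]
    simp [← ha, ← hb]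
    positivity
  rcases eq_or_lt_of_le hb0 with hbz | hbp
  · have : v = 0 := sum_sq_eq_zero hbz.symm
    rw [this, Matrix.mulVec_zero]
    simp [← ha, ← hb]
    positivity
  -- scaled vectors
  set c := Real.sqrt b with hc
  set e := Real.sqrt a with he
  have hc0 : 0 ≤ c := Real.sqrt_nonneg _
  have he0 : 0 ≤ e := Real.sqrt_nonneg _
  have hcsq : c ^ 2 = b := Real.sq_sqrt hb0
  have hesq : e ^ 2 = a := Real.sq_sqrt ha0
  have hdisj' : ∀ i, (c • u) i = 0 ∨ (e • v) i = 0 := fun i => by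
    rcases hdisj i with h | h
    · exact Or.inl (by simp [h])
    · exact Or.inr (by simp [h])
  have hcard' : (Finset.univ.filter (fun i => (c • u) i ≠ 0 ∨ (e • v) i ≠ 0)).card ≤ k := by
    refine le_trans (Finset.card_le_card ?_) hcard
    intro i hi
    simp only [Finset.mem_filter, Finset.mem_univ, true_and, Pi.smul_apply, smul_eq_mul] at *
    rcases hi with h | h
    · exact Or.inl (right_ne_zero_of_mul h)
    · exact Or.inr (right_ne_zero_of_mul h)
  have key := rip_half_abs Ψ k δ hRIP (c • u) (e • v) hdisj' hcard'
  have hP : ∑ j, (Ψ *ᵥ (c • u)) j * (Ψ *ᵥ (e • v)) j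
      = (c * e) * ∑ j, (Ψ *ᵥ u) j * (Ψ *ᵥ v) j := by
    rw [Matrix.mulVec_smul, Matrix.mulVec_smul, Finset.mul_sum]
    refine Finset.sum_congr rfl fun j _ => ?_
    simp only [Pi.smul_apply, smul_eq_mul]
    ring
  have hU : ∑ i, ((c • u) i) ^ 2 = c ^ 2 * a := by
    rw [ha, Finset.mul_sum]
    refine Finset.sum_congr rfl fun i _ => ?_
    simp only [Pi.smul_apply, smul_eq_mul]
    ring
  have hV : ∑ i, ((e • v) i) ^ 2 = e ^ 2 * b := by
    rw [hb, Finset.mul_sum]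
    refine Finset.sum_congr rfl fun i _ => ?_
    simp only [Pi.smul_apply, smul_eq_mul]
    ring
  rw [hP, hU, hV, hcsq, hesq, abs_mul, abs_of_nonneg (mul_nonneg hc0 he0)] at key
  -- key : 2 * (c*e*|P|) ≤ δ * (b*a + a*b)
  set P := ∑ j, (Ψ *ᵥ u) j * (Ψ *ᵥ v) j with hPdef
  have h1 : c * e * |P| ≤ δ * (a * b) := by linarith
  have h2 : (c * e * |P|) ^ 2 ≤ (δ * (a * b)) ^ 2 := by
    have h0 : 0 ≤ c * e * |P| := by positivity
    nlinarith [mul_self_le_mul_self h0 h1]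
  have h3 : (c * e * |P|) ^ 2 = a * b * P ^ 2 := by
    rw [mul_pow, mul_pow, hcsq, hesq, sq_abs]
    ring
  rw [h3] at h2
  have hab : 0 < a * b := mul_pos hap hbp
  have : a * b * P ^ 2 ≤ a * b * (δ ^ 2 * a * b) := by
    calc a * b * P ^ 2 ≤ (δ * (a * b)) ^ 2 := h2
      _ = a * b * (δ ^ 2 * a * b) := by ring
  exact le_of_mul_le_mul_left this hab


noncomputable def extA {p : ℕ} (A : Finset (Fin p)) (w : {i // i ∈ A} → ℝ) : Fin p → ℝ :=
  fun i => if h : i ∈ A then w ⟨i, h⟩ else 0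

theorem extA_not_mem {p : ℕ} (A : Finset (Fin p)) (w : {i // i ∈ A} → ℝ) {i : Fin p}
    (h : i ∉ A) : extA A w i = 0 := dif_neg h

theorem sum_ext {p : ℕ} (A : Finset (Fin p)) (w : {i // i ∈ A} → ℝ) (f : Fin p → ℝ) :
    ∑ j : {i // i ∈ A}, w j * f j.1 = ∑ i, extA A w i * f i := by
  rw [← Finset.sum_subset (Finset.subset_univ A)
    (fun i _ hi => by simp [extA_not_mem A w hi])]
  rw [← Finset.sum_attach A fun i => extA A w i * f i, Finset.univ_eq_attach]
  refine Finset.sum_congr rfl fun j _ => ?_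
  rcases j with ⟨i, hi⟩
  simp [extA, hi]

theorem sum_ext_sq {p : ℕ} (A : Finset (Fin p)) (w : {i // i ∈ A} → ℝ) :
    ∑ j : {i // i ∈ A}, w j ^ 2 = ∑ i, extA A w i ^ 2 := by
  have h := sum_ext A w (extA A w)
  have h1 : ∑ j : {i // i ∈ A}, w j * extA A w j.1 = ∑ j : {i // i ∈ A}, w j ^ 2 := by
    refine Finset.sum_congr rfl fun j _ => ?_
    rcases j with ⟨i, hi⟩
    simp [extA, hi, sq]
  have h2 : ∑ i, extA A w i * extA A w i = ∑ i, extA A w i ^ 2 := by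
    refine Finset.sum_congr rfl fun i _ => by ring
  rw [h1, h2] at h
  exact h

theorem colSub_mulVec {n p : ℕ} (Ψ : Matrix (Fin n) (Fin p) ℝ) (A : Finset (Fin p))
    (w : {i // i ∈ A} → ℝ) : colSub Ψ A *ᵥ w = Ψ *ᵥ extA A w := by
  funext i
  simp only [Matrix.mulVec, dotProduct, colSub, Matrix.of_apply]
  rw [show ∑ j : {i // i ∈ A}, Ψ i j.1 * w j = ∑ j : {i // i ∈ A}, w j * Ψ i j.1 from
    Finset.sum_congr rfl fun j _ => mul_comm _ _, sum_ext]
  refine Finset.sum_congr rfl fun j _ => mul_comm _ _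

theorem colSubT_mulVec {n p : ℕ} (Ψ : Matrix (Fin n) (Fin p) ℝ) (A : Finset (Fin p))
    (z : Fin n → ℝ) (j : {i // i ∈ A}) :
    ((colSub Ψ A)ᵀ *ᵥ z) j = (Ψᵀ *ᵥ z) j.1 := rfl

theorem dot_colSubT {n p : ℕ} (Ψ : Matrix (Fin n) (Fin p) ℝ) (A : Finset (Fin p))
    (w : {i // i ∈ A} → ℝ) (z : Fin n → ℝ) :
    ∑ j, w j * ((colSub Ψ A)ᵀ *ᵥ z) j = ∑ k, (Ψ *ᵥ extA A w) k * z k := by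
  have h : ∑ j, w j * ((colSub Ψ A)ᵀ *ᵥ z) j = (colSub Ψ A *ᵥ w) ⬝ᵥ z := by
    rw [show (∑ j, w j * ((colSub Ψ A)ᵀ *ᵥ z) j) = w ⬝ᵥ ((colSub Ψ A)ᵀ *ᵥ z) from rfl,
      Matrix.dotProduct_mulVec, Matrix.vecMul_transpose]
  rw [h, colSub_mulVec]
  rfl


/-- under Assumption 1, `|d_i| ≤ ¼|x†_{i_A}| + ¼λ` for every `i ∉ A†`. -/
theorem stmt_13 {n p : ℕ} (Ψ : Matrix (Fin n) (Fin p) ℝ)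
    (xdag : Fin p → ℝ) (Adag : Finset (Fin p))
    (hAdag : Adag = Finset.univ.filter (fun i => xdag i ≠ 0))
    (T : ℕ) (hT : T = Adag.card)
    (y : Fin n → ℝ) (hy : y = Ψ *ᵥ xdag)
    (δ : ℝ) (hδ0 : 0 < δ) (hδ1 : δ < 1)
    (hRIP : HasRIP Ψ (T + 1) δ)
    (hAss1 : δ ≤ 1 / (4 * Real.sqrt T + 1))
    (lam : ℝ) (hlam : 0 < lam)
    (A : Finset (Fin p)) (hA : A ⊆ Adag)
    (B : Finset (Fin p)) (hB : B = Adag \ A)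
    (d : Fin p → ℝ) (hdA : ∀ i ∈ A, |d i| = lam)
    (xA : {i // i ∈ A} → ℝ)
    (hxA : xA = ((colSub Ψ A)ᵀ * colSub Ψ A)⁻¹ *ᵥ ((colSub Ψ A)ᵀ *ᵥ y - fun j => d j.1))
    (hdI : ∀ i ∉ A, d i = (Ψᵀ *ᵥ (y - colSub Ψ A *ᵥ xA)) i)
    (iA : Fin p) (hiA : iA ∉ A) (hmax : ∀ j ∉ A, |xdag j| ≤ |xdag iA|) :
    ∀ i ∉ Adag, |d i| ≤ 1 / 4 * |xdag iA| + 1 / 4 * lam := by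
  classical
  intro i0 hi0
  have hcardA : A.card ≤ T := hT ▸ Finset.card_le_card hA
  have hBsub : B ⊆ Adag := hB ▸ Finset.sdiff_subset
  have hABdisj : ∀ i, i ∈ A → i ∉ B := by
    intro i hiA' hiB
    rw [hB, Finset.mem_sdiff] at hiB
    exact hiB.2 hiA'
  have hxdag_zero : ∀ i, i ∉ Adag → xdag i = 0 := by
    intro i hi
    by_contra h
    exact hi (hAdag ▸ Finset.mem_filter.2 ⟨Finset.mem_univ i, h⟩)
  -- vectors
  set X := |xdag iA| with hX
  have hX0 : 0 ≤ X := abs_nonneg _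
  set vB : Fin p → ℝ := fun i => if i ∈ B then xdag i else 0 with hvB
  set xdagR : {i // i ∈ A} → ℝ := fun j => xdag j.1 with hxdagR
  set w : {i // i ∈ A} → ℝ := xA - xdagR with hwdef
  set wf := extA A w with hwf
  set a2 := ∑ i, vB i ^ 2 with ha2def
  set w2 := ∑ i, wf i ^ 2 with hw2def
  have ha20 : 0 ≤ a2 := Finset.sum_nonneg fun i _ => sq_nonneg _
  have hw20 : 0 ≤ w2 := Finset.sum_nonneg fun i _ => sq_nonneg _
  have hvB_zero : ∀ i, i ∉ B → vB i = 0 := fun i hi => if_neg hi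
  have hwf_zero : ∀ i, i ∉ A → wf i = 0 := fun i hi => extA_not_mem A w hi
  have hfilt : ∀ (v : Fin p → ℝ) (S : Finset (Fin p)), (∀ i, i ∉ S → v i = 0) →
      (Finset.univ.filter (fun i => v i ≠ 0)).card ≤ S.card := by
    intro v S h
    apply Finset.card_le_card
    intro i hi
    simp only [Finset.mem_filter, Finset.mem_univ, true_and] at hi
    by_contra hiS
    exact hi (h i hiS)
  -- Positive definiteness of the Gram matrix
  have hPD : (((colSub Ψ A)ᵀ * colSub Ψ A)).PosDef := by
    refine Matrix.PosDef.of_dotProduct_mulVec_pos ?_ ?_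
    · show ((colSub Ψ A)ᵀ * colSub Ψ A)ᴴ = _
      ext j k
      simp only [Matrix.conjTranspose_apply, Matrix.mul_apply, Matrix.transpose_apply,
        star_trivial]
      exact Finset.sum_congr rfl fun i _ => mul_comm _ _
    · intro x hx
      have hxs : star x = x := funext fun j => star_trivial _
      rw [hxs]
      have hGx : ((colSub Ψ A)ᵀ * colSub Ψ A) *ᵥ x = (colSub Ψ A)ᵀ *ᵥ (colSub Ψ A *ᵥ x) :=
        (Matrix.mulVec_mulVec x (colSub Ψ A)ᵀ (colSub Ψ A)).symm
      have hdot : x ⬝ᵥ (((colSub Ψ A)ᵀ * colSub Ψ A) *ᵥ x) = ∑ k, (Ψ *ᵥ extA A x) k ^ 2 := by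
        rw [hGx]
        rw [show x ⬝ᵥ ((colSub Ψ A)ᵀ *ᵥ (colSub Ψ A *ᵥ x))
            = ∑ j, x j * ((colSub Ψ A)ᵀ *ᵥ (colSub Ψ A *ᵥ x)) j from rfl]
        rw [dot_colSubT Ψ A x (colSub Ψ A *ᵥ x), colSub_mulVec]
        exact Finset.sum_congr rfl fun k _ => (sq ((Ψ *ᵥ extA A x) k)) ▸ rfl
      rw [hdot]
      have hxcard : (Finset.univ.filter (fun i => extA A x i ≠ 0)).card ≤ T + 1 :=
        le_trans (hfilt _ A (fun i hi => extA_not_mem A x hi)) (by omega)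
      obtain ⟨hlo, _⟩ := hRIP (extA A x) hxcard
      have hsum : ∑ i, extA A x i ^ 2 = ∑ j : {i // i ∈ A}, x j ^ 2 := (sum_ext_sq A x).symm
      obtain ⟨j0, hj0⟩ := Function.ne_iff.1 hx
      have hpos : 0 < ∑ j : {i // i ∈ A}, x j ^ 2 := by
        have hj0' : x j0 ≠ 0 := by simpa using hj0
        have h1 : 0 < x j0 ^ 2 := lt_of_le_of_ne (sq_nonneg _) (Ne.symm (pow_ne_zero 2 hj0'))
        exact lt_of_lt_of_le h1 (Finset.single_le_sum (fun j _ => sq_nonneg (x j))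
          (Finset.mem_univ j0))
      calc (0:ℝ) < (1 - δ) * ∑ i, extA A x i ^ 2 := by rw [hsum]; nlinarith
        _ ≤ _ := hlo
  have hGdet : IsUnit ((colSub Ψ A)ᵀ * colSub Ψ A).det := hPD.det_pos.ne'.isUnit
  -- normal equations
  have hNormal : ((colSub Ψ A)ᵀ * colSub Ψ A) *ᵥ xA
      = ((colSub Ψ A)ᵀ *ᵥ y) - fun j => d j.1 := by
    rw [hxA, Matrix.mulVec_mulVec, Matrix.mul_nonsing_inv _ hGdet, Matrix.one_mulVec]
  -- split of the true signal
  have hsplit : xdag = extA A xdagR + vB := by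
    funext i
    by_cases hiA' : i ∈ A
    · have hiB : i ∉ B := hABdisj i hiA'
      simp [extA, hiA', hvB, hiB, hxdagR]
    · by_cases hiB : i ∈ B
      · simp [extA_not_mem A xdagR hiA', Pi.add_apply, hvB, hiB, extA, hiA']
      · have hiAdag : i ∉ Adag := by
          intro hmem
          exact hiB (hB ▸ Finset.mem_sdiff.2 ⟨hmem, hiA'⟩)
        simp [extA, hiA', hvB, hiB, hxdag_zero i hiAdag]
  -- the Gram matrix applied to the error w
  have hGw : ((colSub Ψ A)ᵀ * colSub Ψ A) *ᵥ w
      = fun j => ((colSub Ψ A)ᵀ *ᵥ (Ψ *ᵥ vB)) j - d j.1 := by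
    have h1 : ((colSub Ψ A)ᵀ * colSub Ψ A) *ᵥ w
        = ((colSub Ψ A)ᵀ * colSub Ψ A) *ᵥ xA - ((colSub Ψ A)ᵀ * colSub Ψ A) *ᵥ xdagR := by
      rw [hwdef, Matrix.mulVec_sub]
    have h2 : (colSub Ψ A)ᵀ *ᵥ y
        = ((colSub Ψ A)ᵀ * colSub Ψ A) *ᵥ xdagR + (colSub Ψ A)ᵀ *ᵥ (Ψ *ᵥ vB) := by
      rw [hy, hsplit, Matrix.mulVec_add, Matrix.mulVec_add, ← colSub_mulVec,
        Matrix.mulVec_mulVec]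
    rw [h1, hNormal, h2]
    funext j
    simp only [Pi.sub_apply, Pi.add_apply]
    ring
  -- the quadratic form in w, two ways
  have hQ1 : ∑ j, w j * ((((colSub Ψ A)ᵀ * colSub Ψ A) *ᵥ w) j) = ∑ k, (Ψ *ᵥ wf) k ^ 2 := by
    rw [show ((colSub Ψ A)ᵀ * colSub Ψ A) *ᵥ w = (colSub Ψ A)ᵀ *ᵥ (colSub Ψ A *ᵥ w) from
      (Matrix.mulVec_mulVec w (colSub Ψ A)ᵀ (colSub Ψ A)).symm]
    rw [dot_colSubT Ψ A w (colSub Ψ A *ᵥ w), colSub_mulVec]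
    exact Finset.sum_congr rfl fun k _ => (sq ((Ψ *ᵥ extA A w) k)) ▸ rfl
  set P1 := ∑ k, (Ψ *ᵥ wf) k * (Ψ *ᵥ vB) k with hP1def
  set P2 := ∑ j : {i // i ∈ A}, w j * d j.1 with hP2def
  have hQ2 : ∑ j, w j * ((((colSub Ψ A)ᵀ * colSub Ψ A) *ᵥ w) j) = P1 - P2 := by
    rw [hGw]
    simp only [mul_sub]
    rw [Finset.sum_sub_distrib]
    congr 1
    rw [dot_colSubT Ψ A w (Ψ *ᵥ vB)]
  -- RIP lower bound for wf
  have hlow : (1 - δ) * w2 ≤ ∑ k, (Ψ *ᵥ wf) k ^ 2 := by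
    have hcard : (Finset.univ.filter (fun i => wf i ≠ 0)).card ≤ T + 1 :=
      le_trans (hfilt _ A hwf_zero) (by omega)
    exact (hRIP wf hcard).1
  -- cross bound P1
  have hP1sq : P1 ^ 2 ≤ δ ^ 2 * w2 * a2 := by
    apply rip_cross Ψ (T+1) δ hδ0.le hRIP wf vB
    · intro i
      by_cases hiA' : i ∈ A
      · exact Or.inr (hvB_zero i (hABdisj i hiA'))
      · exact Or.inl (hwf_zero i hiA')
    · refine le_trans (le_trans (Finset.card_le_card ?_) (le_of_eq (congrArg Finset.card rfl)))
        (by omega : Adag.card ≤ T + 1)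
      intro i hi
      simp only [Finset.mem_filter, Finset.mem_univ, true_and] at hi
      rcases hi with h | h
      · by_contra hni
        exact h (hwf_zero i (fun hmem => hni (hA hmem)))
      · by_contra hni
        exact h (hvB_zero i (fun hmem => hni (hBsub hmem)))
  -- Cauchy-Schwarz bound P2
  have hP2sq : P2 ^ 2 ≤ w2 * ((A.card : ℝ) * lam ^ 2) := by
    have hcs := Finset.sum_mul_sq_le_sq_mul_sq Finset.univ w (fun j => d j.1)
    have e1 : ∑ j : {i // i ∈ A}, w j ^ 2 = w2 := sum_ext_sq A w
    have e2 : ∑ j : {i // i ∈ A}, (d j.1) ^ 2 = (A.card : ℝ) * lam ^ 2 := by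
      have : ∀ j : {i // i ∈ A}, (d j.1) ^ 2 = lam ^ 2 := fun j => by
        rw [← sq_abs, hdA j.1 j.2]
      rw [Finset.sum_congr rfl fun j _ => this j, Finset.sum_const, Finset.card_univ,
        Fintype.card_coe, nsmul_eq_mul]
    rw [e1, e2] at hcs
    exact hcs
  -- square roots
  set W := Real.sqrt w2 with hWdef
  set aa := Real.sqrt a2 with haadef
  have hW0 : 0 ≤ W := Real.sqrt_nonneg _
  have haa0 : 0 ≤ aa := Real.sqrt_nonneg _
  have hWsq : W ^ 2 = w2 := Real.sq_sqrt hw20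
  have haasq : aa ^ 2 = a2 := Real.sq_sqrt ha20
  set σ := Real.sqrt (A.card : ℝ) with hσdef
  have hσ0 : 0 ≤ σ := Real.sqrt_nonneg _
  have hσsq : σ ^ 2 = (A.card : ℝ) := Real.sq_sqrt (Nat.cast_nonneg _)
  have habsP1 : |P1| ≤ δ * W * aa := by
    have h1 : P1 ^ 2 ≤ (δ * W * aa) ^ 2 := by
      rw [mul_pow, mul_pow, hWsq, haasq]
      calc P1 ^ 2 ≤ δ ^ 2 * w2 * a2 := hP1sq
        _ = δ ^ 2 * w2 * a2 := rfl
    calc |P1| = Real.sqrt (P1 ^ 2) := (Real.sqrt_sq_eq_abs P1).symm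
      _ ≤ Real.sqrt ((δ * W * aa) ^ 2) := Real.sqrt_le_sqrt h1
      _ = |δ * W * aa| := Real.sqrt_sq_eq_abs _
      _ = δ * W * aa := abs_of_nonneg (by positivity)
  have habsP2 : |P2| ≤ W * (σ * lam) := by
    have h1 : P2 ^ 2 ≤ (W * (σ * lam)) ^ 2 := by
      rw [mul_pow, mul_pow, hWsq, hσsq]
      calc P2 ^ 2 ≤ w2 * ((A.card : ℝ) * lam ^ 2) := hP2sq
        _ = w2 * ((A.card:ℝ) * lam ^ 2) := rfl
    calc |P2| = Real.sqrt (P2 ^ 2) := (Real.sqrt_sq_eq_abs P2).symm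
      _ ≤ Real.sqrt ((W * (σ * lam)) ^ 2) := Real.sqrt_le_sqrt h1
      _ = |W * (σ * lam)| := Real.sqrt_sq_eq_abs _
      _ = W * (σ * lam) := abs_of_nonneg (mul_nonneg hW0 (mul_nonneg hσ0 hlam.le))
  -- the key bound on W
  have hWbound : (1 - δ) * W ≤ δ * aa + lam * σ := by
    have h1 : (1 - δ) * w2 ≤ P1 - P2 := by rw [← hQ2]; rw [← hQ1] at hlow; exact hlow
    have h2 : P1 - P2 ≤ δ * W * aa + W * (σ * lam) := by
      have := abs_le.1 (abs_abs P1 ▸ le_refl |P1|)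
      calc P1 - P2 ≤ |P1| + |P2| := by
            have := neg_abs_le P2
            have := le_abs_self P1
            linarith
        _ ≤ δ * W * aa + W * (σ * lam) := add_le_add habsP1 habsP2
    have h3 : (1 - δ) * W ^ 2 ≤ W * (δ * aa + lam * σ) := by
      rw [hWsq]
      calc (1 - δ) * w2 ≤ δ * W * aa + W * (σ * lam) := le_trans h1 h2
        _ = W * (δ * aa + lam * σ) := by ring
    rcases eq_or_lt_of_le hW0 with hWz | hWp
    · rw [← hWz]
      have : 0 ≤ δ * aa + lam * σ := add_nonneg (mul_nonneg hδ0.le haa0) (mul_nonneg hlam.le hσ0)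
      linarith
    · have := le_of_mul_le_mul_right (by nlinarith : (1 - δ) * W * W ≤ (δ * aa + lam * σ) * W) hWp
      linarith
  -- bound on aa
  have haaX : aa ≤ Real.sqrt (B.card : ℝ) * X := by
    have h1 : a2 ≤ (B.card : ℝ) * X ^ 2 := by
      have e1 : a2 = ∑ i ∈ B, xdag i ^ 2 := by
        rw [ha2def, ← Finset.sum_subset (Finset.subset_univ B)
          (fun i _ hi => by simp [hvB_zero i hi])]
        exact Finset.sum_congr rfl fun i hi => by simp [hvB, hi]
      rw [e1]
      calc ∑ i ∈ B, xdag i ^ 2 ≤ ∑ _i ∈ B, X ^ 2 := by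
            refine Finset.sum_le_sum fun i hi => ?_
            have hiA' : i ∉ A := (Finset.mem_sdiff.1 (hB ▸ hi)).2
            have := hmax i hiA'
            calc xdag i ^ 2 = |xdag i| ^ 2 := (sq_abs _).symm
              _ ≤ X ^ 2 := by nlinarith [abs_nonneg (xdag i)]
        _ = (B.card : ℝ) * X ^ 2 := by rw [Finset.sum_const, nsmul_eq_mul]
    calc aa = Real.sqrt a2 := rfl
      _ ≤ Real.sqrt ((B.card : ℝ) * X ^ 2) := Real.sqrt_le_sqrt h1
      _ = Real.sqrt (B.card : ℝ) * Real.sqrt (X ^ 2) := Real.sqrt_mul (Nat.cast_nonneg _) _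
      _ = Real.sqrt (B.card : ℝ) * X := by rw [Real.sqrt_sq hX0]
  -- the residual identity for i0
  have hi0A : i0 ∉ A := fun hmem => hi0 (hA hmem)
  set g : Fin p → ℝ := vB - wf with hgdef
  have hg : xdag - extA A xA = g := by
    funext i
    by_cases hiA' : i ∈ A
    · have hiB : i ∉ B := hABdisj i hiA'
      simp [Pi.sub_apply, extA, hiA', hgdef, hwf, hvB, hiB, hwdef, hxdagR]
      try ring
    · by_cases hiB : i ∈ B
      · simp [Pi.sub_apply, extA_not_mem A xA hiA', hgdef, hwf, hvB, hiB,
          extA_not_mem A w hiA']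
      · have hiAdag : i ∉ Adag := by
          intro hmem
          exact hiB (hB ▸ Finset.mem_sdiff.2 ⟨hmem, hiA'⟩)
        simp [Pi.sub_apply, extA_not_mem A xA hiA', hgdef, hvB, hiB,
          extA_not_mem A w hiA', hwf, hxdag_zero i hiAdag]
  have hdi0 : d i0 = ∑ k, (Ψ *ᵥ (Pi.single i0 1 : Fin p → ℝ)) k * (Ψ *ᵥ g) k := by
    rw [hdI i0 hi0A]
    have hres : y - colSub Ψ A *ᵥ xA = Ψ *ᵥ g := by
      rw [hy, colSub_mulVec, ← Matrix.mulVec_sub, hg]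
    rw [hres]
    have e1 : ∀ k, (Ψ *ᵥ (Pi.single i0 1 : Fin p → ℝ)) k = Ψ k i0 := by
      intro k
      rw [Matrix.mulVec_single]
      exact mul_one _
    rw [show (Ψᵀ *ᵥ (Ψ *ᵥ g)) i0 = ∑ k, Ψ k i0 * (Ψ *ᵥ g) k from rfl]
    exact Finset.sum_congr rfl fun k _ => by rw [e1 k]
  -- apply the cross bound
  have hgvanish : ∀ i, i ∉ Adag → g i = 0 := by
    intro i hi
    have hiA' : i ∉ A := fun hmem => hi (hA hmem)
    have hiB : i ∉ B := fun hmem => hi (hBsub hmem)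
    simp [hgdef, hvB_zero i hiB, hwf_zero i hiA']
  have hDsq : (d i0) ^ 2 ≤ δ ^ 2 * (∑ k, (Pi.single i0 1 : Fin p → ℝ) k ^ 2) * (∑ i, g i ^ 2) := by
    rw [hdi0]
    apply rip_cross Ψ (T+1) δ hδ0.le hRIP
    · intro i
      by_cases hii : i = i0
      · subst hii
        exact Or.inr (hgvanish i hi0)
      · exact Or.inl (Pi.single_eq_of_ne hii 1)
    · refine le_trans (Finset.card_le_card (fun i hi => ?_))
        (le_trans (Finset.card_insert_le i0 Adag) (by omega))
      simp only [Finset.mem_filter, Finset.mem_univ, true_and] at hi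
      rcases hi with h | h
      · by_cases hii : i = i0
        · exact Finset.mem_insert.2 (Or.inl hii)
        · exact absurd (Pi.single_eq_of_ne hii 1) h
      · refine Finset.mem_insert.2 (Or.inr ?_)
        by_contra hni
        exact h (hgvanish i hni)
  have hsingle : ∑ k, (Pi.single i0 1 : Fin p → ℝ) k ^ 2 = 1 := by
    have e : ∀ k, (Pi.single i0 1 : Fin p → ℝ) k ^ 2 = if k = i0 then 1 else 0 := by
      intro k
      by_cases hk : k = i0
      · subst hk; simp
      · simp [Pi.single_eq_of_ne hk, hk]
    rw [Finset.sum_congr rfl fun k _ => e k, Finset.sum_ite_eq' Finset.univ i0 (fun _ => (1:ℝ))]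
    simp
  have hgsum : ∑ i, g i ^ 2 = a2 + w2 := by
    rw [ha2def, hw2def, ← Finset.sum_add_distrib]
    refine Finset.sum_congr rfl fun i _ => ?_
    by_cases hiA' : i ∈ A
    · have hiB : i ∉ B := hABdisj i hiA'
      simp [hgdef, hvB_zero i hiB]
    · simp [hgdef, hwf_zero i hiA']
  rw [hsingle, hgsum] at hDsq
  -- conclude via final_step
  have hst : A.card + B.card = T := by
    have h1 : B.card = Adag.card - A.card := by rw [hB, Finset.card_sdiff_of_subset hA]
    omega
  have hD2 : |d i0| ^ 2 ≤ δ ^ 2 * (aa ^ 2 + W ^ 2) := by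
    rw [sq_abs, hWsq, haasq]
    calc (d i0) ^ 2 ≤ δ ^ 2 * 1 * (a2 + w2) := hDsq
      _ = δ ^ 2 * (a2 + w2) := by ring
  exact final_step T A.card B.card hst δ X lam aa W (|d i0|) hδ0 hδ1 hX0 hlam.le haa0 hW0
    (abs_nonneg _) hAss1 haaX hWbound hD2
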